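/- arXiv:1006.4149 — 2 statements merged into one kernel-verified Lean document; each statement's English description precedes it below -/
import Mathlib

section
/- Let F be a finite set; for each p ∈ F let μ_p ∈ Λ, let Ψ_p be a finite list of elements of Λ, and let Φ_p be a finite list of nonzero elements of Λ spanning V. Let Y ∈ V be polarizing for every Φ_p, let 𝔞 be an alcove for the data (μ_p, Φ_p)_{p∈F}, and for each p let q_p : Λ → ℂ be a quasi-polynomial function coinciding with Θ[Φ_p↑Y] on T(𝔞 − μ_p) ∩ Λ, where T(𝔞 − μ_p) is the Φ_p-tope containing 𝔞 − μ_p. Then for every compact subset 𝔟 ⊂ 𝔞 there exists a positive integer K such that for every integer k > K and every λ ∈ (k·𝔟) ∩ Λ, Σ_{p∈F} Σ_{η∈Ψ_p} q_p(λ − η − kμ_p) = Σ_{p∈F} Σ_{η∈Ψ_p} Θ[Φ_p↑Y](λ − η − kμ_p). -/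
noncomputable section

open Module
open scoped Pointwise

variable {V : Type*} [NormedAddCommGroup V] [InnerProductSpace ℝ V] [FiniteDimensional ℝ V]

/-- A full-rank lattice: a free `ℤ`-submodule of rank `dim V` that spans `V` over `ℝ`. -/
def IsLattice (Λ : Submodule ℤ V) : Prop :=
  Submodule.span ℝ (Λ : Set V) = ⊤ ∧ Nonempty (Basis (Fin (finrank ℝ V)) ℤ Λ)

/-- Filter a list by a (classical) predicate. -/
def filterP (Φ : List V) (P : V → Prop) : List V :=
  Φ.filter fun v => @decide (P v) (Classical.propDecidable _)

/-- A vector `Y` is polarizing for the list `Φ` if `(φ, Y) ≠ 0` for every entry `φ`. -/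
def Polarizing (Φ : List V) (Y : V) : Prop := ∀ φ ∈ Φ, (inner ℝ φ Y : ℝ) ≠ 0

/-- The partition function `Θ[Φ↑Y] : V → ℤ`. -/
def theta (Φ : List V) (Y : V) (lam : V) : ℤ :=
  (-1 : ℤ) ^ (filterP Φ (fun φ => (inner ℝ φ Y : ℝ) < 0)).length *
    (Set.ncard {n : Fin Φ.length → ℕ |
      ∑ i : Fin Φ.length,
        (if (0 : ℝ) < (inner ℝ (Φ.get i) Y : ℝ) then ((n i : ℤ) • Φ.get i)
         else (-(((n i : ℤ) + 1) • Φ.get i))) = lam} : ℤ)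

/-- Polynomial functions on a real vector space, with values in `ℂ`:
the subalgebra of functions generated by (complexified) real linear functionals. -/
def IsPolyFun {W : Type*} [AddCommGroup W] [Module ℝ W] (p : W → ℂ) : Prop :=
  p ∈ Algebra.adjoin ℂ {g : W → ℂ | ∃ l : W →ₗ[ℝ] ℝ, g = fun w => ((l w : ℝ) : ℂ)}

/-- A function is quasi-polynomial on the lattice `Ξ` if there is a finite-index
sublattice `Ξ₀` such that on every coset `ξ + Ξ₀` of a lattice point `ξ ∈ Ξ`, the function
agrees with a polynomial function. -/
def IsQuasiPoly {W : Type*} [AddCommGroup W] [Module ℝ W] (Ξ : Submodule ℤ W) (f : W → ℂ) :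
    Prop :=
  ∃ Ξ₀ : Submodule ℤ W, Ξ₀ ≤ Ξ ∧ (∃ N : ℕ, 0 < N ∧ ∀ v ∈ Ξ, (N : ℤ) • v ∈ Ξ₀) ∧
    ∀ ξ ∈ Ξ, ∃ p : W → ℂ, IsPolyFun p ∧ ∀ μ ∈ Ξ₀, f (ξ + μ) = p (ξ + μ)

/-- `γ` is `Φ`-regular: it lies in the span of `Φ` and is not a linear combination of fewer
than `dim span Φ` elements of `Φ`. -/
def PhiRegular (Φ : List V) (γ : V) : Prop :=
  γ ∈ Submodule.span ℝ {v | v ∈ Φ} ∧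
    ¬∃ s : Finset V, ↑s ⊆ {v | v ∈ Φ} ∧
      s.card < finrank ℝ (Submodule.span ℝ {v | v ∈ Φ}) ∧ γ ∈ Submodule.span ℝ (s : Set V)

/-- A `Φ`-tope: a connected component of the set of `Φ`-regular elements. -/
def IsTope (Φ : List V) (T : Set V) : Prop :=
  ∃ γ, PhiRegular Φ γ ∧ T = connectedComponentIn {x | PhiRegular Φ x} γ

/-- An alcove for the data `(μ_p, Φ_p)`: a connected component of the set of `γ` such that
`γ - μ p` is `Φ p`-regular for all `p`. -/
def IsAlcove {F : Type*} (μ : F → V) (Φ : F → List V) (A : Set V) : Prop :=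
  ∃ γ, (∀ p, PhiRegular (Φ p) (γ - μ p)) ∧
    A = connectedComponentIn {x | ∀ p, PhiRegular (Φ p) (x - μ p)} γ


omit [FiniteDimensional ℝ V] in
lemma phiRegular_smul (Φ : List V) {c : ℝ} (hc : c ≠ 0) {γ : V} (h : PhiRegular Φ γ) :
    PhiRegular Φ (c • γ) := by
  refine ⟨Submodule.smul_mem _ _ h.1, ?_⟩
  rintro ⟨s, h1, h2, h3⟩
  exact h.2 ⟨s, h1, h2, by
    have := Submodule.smul_mem (Submodule.span ℝ (s : Set V)) c⁻¹ h3
    rwa [inv_smul_smul₀ hc] at this⟩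

lemma phiRegular_isOpen (Φ : List V) (hspan : Submodule.span ℝ {v | v ∈ Φ} = ⊤) :
    IsOpen {x : V | PhiRegular Φ x} := by
  have hfin : {s : Finset V | ↑s ⊆ {v | v ∈ Φ} ∧
      s.card < finrank ℝ (Submodule.span ℝ {v | v ∈ Φ})}.Finite := by
    have hS : {v : V | v ∈ Φ}.Finite := Φ.finite_toSet
    have h1 : {s : Finset V | ↑s ⊆ {v | v ∈ Φ}}.Finite := by
      have h2 : ((↑) ⁻¹' {t : Set V | t ⊆ {v | v ∈ Φ}} : Set (Finset V)).Finite :=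
        hS.finite_subsets.preimage (Set.injOn_of_injective Finset.coe_injective)
      exact h2.subset fun s hs => hs
    exact h1.subset fun s hs => hs.1
  have heq : {x : V | PhiRegular Φ x} =
      ⋂ s ∈ {s : Finset V | ↑s ⊆ {v | v ∈ Φ} ∧
        s.card < finrank ℝ (Submodule.span ℝ {v | v ∈ Φ})},
        ((Submodule.span ℝ (s : Set V) : Set V))ᶜ := by
    ext x
    simp only [Set.mem_setOf_eq, Set.mem_iInter, Set.mem_compl_iff, SetLike.mem_coe,
      PhiRegular, hspan, Submodule.mem_top, true_and]
    constructor
    · rintro h s ⟨h1, h2⟩ hx; exact h ⟨s, h1, h2, hx⟩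
    · rintro h ⟨s, h1, h2, h3⟩; exact h s ⟨h1, h2⟩ h3
  rw [heq]
  exact hfin.isOpen_biInter fun s _ =>
    (Submodule.closed_of_finiteDimensional _).isOpen_compl

omit [FiniteDimensional ℝ V] in
lemma tope_smul_mem {Φ : List V} {T : Set V} (hT : IsTope Φ T) {c : ℝ} (hc : 0 < c)
    {y : V} (hy : y ∈ T) : c • y ∈ T := by
  obtain ⟨γ₀, hγ₀, rfl⟩ := hT
  have hyR : y ∈ {x | PhiRegular Φ x} := connectedComponentIn_subset _ _ hy
  have hray : (fun t : ℝ => t • y) '' Set.Ioi 0 ⊆ {x | PhiRegular Φ x} := by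
    rintro _ ⟨t, ht, rfl⟩
    exact phiRegular_smul Φ (ne_of_gt ht) hyR
  have hconn : IsPreconnected ((fun t : ℝ => t • y) '' Set.Ioi 0) :=
    isPreconnected_Ioi.image _ (Continuous.continuousOn (by continuity))
  have hmem : y ∈ (fun t : ℝ => t • y) '' Set.Ioi 0 :=
    ⟨1, Set.mem_Ioi.mpr one_pos, one_smul ℝ y⟩
  have hsub := hconn.subset_connectedComponentIn hmem hray
  have hcy := hsub ⟨c, hc, rfl⟩
  rwa [← connectedComponentIn_eq hy] at hcy

lemma tope_isOpen {Φ : List V} (hspan : Submodule.span ℝ {v | v ∈ Φ} = ⊤)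
    {T : Set V} (hT : IsTope Φ T) : IsOpen T := by
  obtain ⟨γ₀, _, rfl⟩ := hT
  exact (phiRegular_isOpen Φ hspan).connectedComponentIn


/-- Asymptotic agreement: for every compact `𝔟 ⊂ 𝔞` there is `K` such that for `k > K` and
`λ ∈ k𝔟 ∩ Λ`, the sums of shifted quasi-polynomials and shifted partition functions agree. -/
theorem sum_quasiPoly_eq_sum_theta_on_scaled_compact
    {F : Type*} [Fintype F]
    (Λ : Submodule ℤ V) (hΛ : IsLattice Λ)
    (μ : F → V) (hμ : ∀ p, μ p ∈ Λ)
    (Ψ : F → List V) (hΨ : ∀ p, ∀ η ∈ Ψ p, η ∈ Λ)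
    (Φ : F → List V)
    (hΦ0 : ∀ p, ∀ φ ∈ Φ p, φ ≠ 0) (hΦΛ : ∀ p, ∀ φ ∈ Φ p, φ ∈ Λ)
    (hspan : ∀ p, Submodule.span ℝ {v | v ∈ Φ p} = ⊤)
    (Y : V) (hY : ∀ p, Polarizing (Φ p) Y)
    (A : Set V) (hA : IsAlcove μ Φ A)
    (T : F → Set V) (hT : ∀ p, IsTope (Φ p) (T p))
    (hTA : ∀ p, ∀ x ∈ A, x - μ p ∈ T p)
    (q : F → V → ℂ) (hq : ∀ p, IsQuasiPoly Λ (q p))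
    (hqT : ∀ p, ∀ lam ∈ (Λ : Set V) ∩ T p, q p lam = (theta (Φ p) Y lam : ℂ))
    (B : Set V) (hB : IsCompact B) (hBA : B ⊆ A) :
    ∃ K : ℕ, 0 < K ∧ ∀ k : ℤ, (K : ℤ) < k → ∀ lam ∈ Λ, lam ∈ (k : ℝ) • B →
      (∑ p : F, ((Ψ p).map (fun η => q p (lam - η - k • μ p))).sum) =
        ∑ p : F, ((Ψ p).map (fun η => (theta (Φ p) Y (lam - η - k • μ p) : ℂ))).sum := by
  classical
  have hTo : ∀ p, IsOpen (T p) := fun p => tope_isOpen (hspan p) (hT p)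
  have hBB : ∀ p, IsCompact ((fun x => x - μ p) '' B) :=
    fun p => hB.image (by continuity)
  have hBT : ∀ p, (fun x => x - μ p) '' B ⊆ T p := by
    rintro p _ ⟨x, hx, rfl⟩
    exact hTA p x (hBA hx)
  choose ε hε hεT using fun p => (hBB p).exists_thickening_subset_open (hTo p) (hBT p)
  set M : ℝ := ∑ p : F, ((Ψ p).map (fun η => ‖η‖)).sum with hMdef
  have hηM : ∀ p : F, ∀ η ∈ Ψ p, ‖η‖ ≤ M := by
    intro p η hη
    have h1 : ‖η‖ ≤ ((Ψ p).map (fun η => ‖η‖)).sum := by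
      refine List.single_le_sum (fun x hx => ?_) _ (List.mem_map_of_mem hη)
      obtain ⟨z, _, rfl⟩ := List.mem_map.mp hx
      exact norm_nonneg z
    have h2 : ((Ψ p).map (fun η => ‖η‖)).sum ≤ M :=
      Finset.single_le_sum (f := fun p => ((Ψ p).map (fun η => ‖η‖)).sum)
        (fun p _ => List.sum_nonneg (by
          intro x hx
          obtain ⟨z, _, rfl⟩ := List.mem_map.mp hx
          exact norm_nonneg z)) (Finset.mem_univ p)
    linarith
  set K : ℕ := (Finset.univ.sup fun p => ⌈(M + 1) / ε p⌉₊) + 1 with hKdef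
  refine ⟨K, Nat.succ_pos _, ?_⟩
  intro k hk lam hlam hlamB
  have hk0 : (0 : ℤ) < k := lt_of_le_of_lt (by positivity) hk
  have hkR : (0 : ℝ) < (k : ℝ) := by exact_mod_cast hk0
  obtain ⟨b, hbB, hbl⟩ := hlamB
  have key : ∀ p : F, ∀ η ∈ Ψ p, lam - η - k • μ p ∈ (Λ : Set V) ∩ T p := by
    intro p η hη
    constructor
    · exact sub_mem (sub_mem hlam (hΨ p η hη)) (Submodule.smul_mem _ k (hμ p))
    · have hdivlt : (M + 1) / ε p < (k : ℝ) := by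
        have c1 : (M + 1) / ε p ≤ (⌈(M + 1) / ε p⌉₊ : ℝ) := Nat.le_ceil _
        have c2 : (⌈(M + 1) / ε p⌉₊ : ℝ) ≤ ((Finset.univ.sup fun p => ⌈(M + 1) / ε p⌉₊ : ℕ) : ℝ) :=
          Nat.cast_le.mpr (Finset.le_sup (f := fun p => ⌈(M + 1) / ε p⌉₊) (Finset.mem_univ p))
        have c3 : ((Finset.univ.sup fun p => ⌈(M + 1) / ε p⌉₊ : ℕ) : ℝ) < (K : ℝ) := by
          rw [hKdef]; push_cast; linarith
        have c4 : (K : ℝ) < (k : ℝ) := by exact_mod_cast hk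
        linarith
      have hnlt : ‖η‖ < (k : ℝ) * ε p := by
        have := (div_lt_iff₀ (hε p)).mp hdivlt
        have := hηM p η hη
        nlinarith [hε p]
      have hthick : b - μ p - (k : ℝ)⁻¹ • η ∈
          Metric.thickening (ε p) ((fun x => x - μ p) '' B) := by
        rw [Metric.mem_thickening_iff]
        refine ⟨b - μ p, ⟨b, hbB, rfl⟩, ?_⟩
        rw [dist_eq_norm]
        have : b - μ p - (k : ℝ)⁻¹ • η - (b - μ p) = -((k : ℝ)⁻¹ • η) := by abel
        rw [this, norm_neg, norm_smul, norm_inv, Real.norm_eq_abs, abs_of_pos hkR]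
        rw [inv_mul_lt_iff₀ hkR]
        exact hnlt
      have hTmem : b - μ p - (k : ℝ)⁻¹ • η ∈ T p := hεT p hthick
      have hsc : (k : ℝ) • (b - μ p - (k : ℝ)⁻¹ • η) ∈ T p :=
        tope_smul_mem (hT p) hkR hTmem
      have hbl' : (k : ℝ) • b = lam := hbl
      have heq2 : (k : ℝ) • (b - μ p - (k : ℝ)⁻¹ • η) = lam - η - k • μ p := by
        rw [smul_sub, smul_sub, smul_inv_smul₀ (ne_of_gt hkR), hbl',
          Int.cast_smul_eq_zsmul ℝ k (μ p)]
        abel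
      rwa [heq2] at hsc
  refine Finset.sum_congr rfl fun p _ => ?_
  congr 1
  refine List.map_congr_left fun η hη => ?_
  exact hqT p _ (key p η hη)

end
end

section
/- Let F be a finite set; for each p ∈ F let μ_p ∈ Λ, let Ψ_p be a finite list of elements of Λ, and let Φ_p be a finite list of nonzero elements of Λ spanning V. Let Y and Y' both be polarizing for every Φ_p, let 𝔞 be an alcove for the data (μ_p, Φ_p)_{p∈F}, and for each p let q_p (resp. q'_p) be a quasi-polynomial function on Λ coinciding with Θ[Φ_p↑Y] (resp. with Θ[Φ_p↑Y']) on T(𝔞 − μ_p) ∩ Λ. Assume that for every integer k ≥ 0 and every λ ∈ Λ, Σ_{p∈F} Σ_{η∈Ψ_p} Θ[Φ_p↑Y](λ − η − kμ_p) = Σ_{p∈F} Σ_{η∈Ψ_p} Θ[Φ_p↑Y'](λ − η − kμ_p). Then for every λ ∈ Λ, Σ_{p∈F} Σ_{η∈Ψ_p} q_p(λ − η) = Σ_{p∈F} Σ_{η∈Ψ_p} q'_p(λ − η); that is, the quasi-polynomial character Δ built from these data does not depend on the choice of the polarizing vector. -/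
noncomputable section

open Module

variable {V : Type*} [NormedAddCommGroup V] [InnerProductSpace ℝ V] [FiniteDimensional ℝ V]

/-! ### Auxiliary lemmas -/

set_option linter.unusedSectionVars false

open MvPolynomial in
lemma mvZero : ∀ (n : ℕ) (F : MvPolynomial (Fin n) ℂ) (S : Fin n → Set ℂ),
    (∀ i, (S i).Infinite) →
    (∀ x : Fin n → ℂ, (∀ i, x i ∈ S i) → MvPolynomial.eval x F = 0) → F = 0 := by
  intro n
  induction n with
  | zero =>
    intro F S hS h
    obtain ⟨a, rfl⟩ := MvPolynomial.C_surjective (Fin 0) F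
    have := h (fun _ => 0) (fun i => i.elim0)
    rw [MvPolynomial.eval_C] at this
    rw [this, map_zero]
  | succ n ih =>
    intro F S hS h
    set Q := finSuccEquiv ℂ n F with hQ
    have hcoeff : ∀ j : ℕ, Q.coeff j = 0 := by
      intro j
      apply ih _ (fun i => S i.succ) (fun i => hS i.succ)
      intro s hs
      have hpz : (Q.map (MvPolynomial.eval s)) = 0 := by
        apply Polynomial.eq_zero_of_infinite_isRoot
        apply Set.Infinite.mono (s := S 0) ?_ (hS 0)
        intro y hy
        simp only [Set.mem_setOf_eq, Polynomial.IsRoot]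
        rw [← eval_eq_eval_mv_eval' s y F]
        apply h
        intro i
        refine Fin.cases ?_ ?_ i
        · simpa using hy
        · intro i; simpa using hs i
      have := congrArg (fun P => Polynomial.coeff P j) hpz
      simpa using this
    have : Q = 0 := Polynomial.ext fun j => by rw [hcoeff, Polynomial.coeff_zero]
    have := congrArg (finSuccEquiv ℂ n).symm this
    rwa [AlgEquiv.symm_apply_apply, map_zero] at this

section PolyFun

variable {W W' : Type*} [AddCommGroup W] [Module ℝ W] [AddCommGroup W'] [Module ℝ W']

lemma IsPolyFun.sub {p q : W → ℂ} (hp : IsPolyFun p) (hq : IsPolyFun q) :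
    IsPolyFun (fun w => p w - q w) := Subalgebra.sub_mem _ hp hq

lemma isPolyFun_zero : IsPolyFun (fun _ : W => (0 : ℂ)) := Subalgebra.zero_mem _

lemma IsPolyFun.add {p q : W → ℂ} (hp : IsPolyFun p) (hq : IsPolyFun q) :
    IsPolyFun (fun w => p w + q w) := Subalgebra.add_mem _ hp hq

lemma isPolyFun_comp_affine (L : W' →ₗ[ℝ] W) (c : W) {p : W → ℂ} (hp : IsPolyFun p) :
    IsPolyFun (fun w => p (c + L w)) := by
  unfold IsPolyFun at *
  induction hp using Algebra.adjoin_induction with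
  | mem g hg =>
    obtain ⟨l, rfl⟩ := hg
    have : (fun w : W' => (((l (c + L w)) : ℝ) : ℂ))
        = (fun w : W' => ((((l.comp L) w) : ℝ) : ℂ)) + (fun _ => ((l c : ℝ) : ℂ)) := by
      funext w
      simp [Pi.add_apply, LinearMap.comp_apply, map_add]
      ring
    rw [this]
    exact Subalgebra.add_mem _ (Algebra.subset_adjoin ⟨l.comp L, rfl⟩)
      (Subalgebra.algebraMap_mem (Algebra.adjoin ℂ _) ((l c : ℝ) : ℂ))
  | algebraMap r => exact Subalgebra.algebraMap_mem _ r
  | add x y hx hy ihx ihy => exact Subalgebra.add_mem _ ihx ihy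
  | mul x y hx hy ihx ihy => exact Subalgebra.mul_mem _ ihx ihy

lemma isPolyFun_rep {ι : Type*} [Fintype ι] (e : Basis ι ℝ W) {p : W → ℂ} (hp : IsPolyFun p) :
    ∃ F : MvPolynomial ι ℂ,
      ∀ w, p w = MvPolynomial.eval (fun i => ((e.repr w i : ℝ) : ℂ)) F := by
  set E : MvPolynomial ι ℂ →ₐ[ℂ] (W → ℂ) :=
    MvPolynomial.aeval (fun i => (fun w => ((e.repr w i : ℝ) : ℂ))) with hE
  have hrange : Algebra.adjoin ℂ {g : W → ℂ | ∃ l : W →ₗ[ℝ] ℝ, g = fun w => ((l w : ℝ) : ℂ)}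
      ≤ E.range := by
    rw [Algebra.adjoin_le_iff]
    rintro g ⟨l, rfl⟩
    refine ⟨∑ i, MvPolynomial.C ((l (e i) : ℝ) : ℂ) * MvPolynomial.X i, ?_⟩
    funext w
    simp only [map_sum, map_mul, MvPolynomial.aeval_C, MvPolynomial.aeval_X]
    have hl : l w = ∑ i, e.repr w i * l (e i) := by
      conv_lhs => rw [← e.sum_repr w]
      rw [map_sum]
      congr 1; funext i; rw [map_smul, smul_eq_mul]
    rw [hl]
    push_cast
    rw [Finset.sum_apply]
    congr 1; funext i
    simp [hE, MvPolynomial.aeval_X, mul_comm]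
  obtain ⟨F, hF⟩ := hrange hp
  refine ⟨F, fun w => ?_⟩
  have := congrFun hF w
  rw [← this, hE]
  show (MvPolynomial.aeval (R := ℂ) (fun i => (fun w' : W => ((e.repr w' i : ℝ) : ℂ))) F) w
    = _
  have h2 : (MvPolynomial.aeval (R := ℂ)
      (fun i => (fun w' : W => ((e.repr w' i : ℝ) : ℂ))) F) w
      = MvPolynomial.aeval (fun i => ((e.repr w i : ℝ) : ℂ)) F := by
    have := MvPolynomial.comp_aeval (R := ℂ)
      (f := fun i => (fun w' : W => ((e.repr w' i : ℝ) : ℂ)))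
      (φ := Pi.evalAlgHom ℂ (fun _ : W => ℂ) w)
    exact congrFun (congrArg DFunLike.coe this) F
  rw [h2, ← MvPolynomial.coe_aeval_eq_eval]
  rfl

lemma isPolyFun_listSum {α : Type*} (l : List α) (g : α → W → ℂ)
    (h : ∀ a ∈ l, IsPolyFun (g a)) :
    IsPolyFun (fun w => (l.map (fun a => g a w)).sum) := by
  induction l with
  | nil => simpa using isPolyFun_zero
  | cons a t ih =>
    simp only [List.map_cons, List.sum_cons]
    exact (h a List.mem_cons_self).add (ih fun b hb => h b (List.mem_cons_of_mem _ hb))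

lemma isPolyFun_finsetSum {ι : Type*} (s : Finset ι) (g : ι → W → ℂ)
    (h : ∀ i ∈ s, IsPolyFun (g i)) : IsPolyFun (fun w => ∑ i ∈ s, g i w) := by
  classical
  induction s using Finset.induction with
  | empty => simpa using isPolyFun_zero
  | @insert a s ha ih =>
    have : (fun w => ∑ i ∈ insert a s, g i w)
        = fun w => g a w + ∑ i ∈ s, g i w := by
      funext w; rw [Finset.sum_insert ha]
    rw [this]
    exact (h a (Finset.mem_insert_self a s)).add
      (ih fun i hi => h i (Finset.mem_insert_of_mem hi))

end PolyFun

lemma list_sum_map_sub {α : Type*} (l : List α) (f g : α → ℂ) :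
    (l.map (fun a => f a - g a)).sum = (l.map f).sum - (l.map g).sum := by
  induction l with
  | nil => simp
  | cons a t ih => simp [ih]; ring

lemma list_single_le_sum {α : Type*} (l : List α) (f : α → ℝ) (hf : ∀ a ∈ l, 0 ≤ f a) :
    ∀ a ∈ l, f a ≤ (l.map f).sum := by
  induction l with
  | nil => simp
  | cons b t ih =>
    intro a ha
    rcases List.mem_cons.1 ha with rfl | ha'
    · simp only [List.map_cons, List.sum_cons]
      have : 0 ≤ (t.map f).sum :=
        List.sum_nonneg (by rintro x hx; obtain ⟨y, hy, rfl⟩ := List.mem_map.1 hx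
                            exact hf y (List.mem_cons_of_mem _ hy))
      linarith
    · simp only [List.map_cons, List.sum_cons]
      have := ih (fun x hx => hf x (List.mem_cons_of_mem _ hx)) a ha'
      have h0 := hf b List.mem_cons_self
      linarith

lemma regular_open (Φ : List V) (hspan : Submodule.span ℝ {v | v ∈ Φ} = ⊤) :
    IsOpen {x | PhiRegular Φ x} := by
  have he : {x : V | PhiRegular Φ x} =
      (⋃ s ∈ {s : Finset V | ↑s ⊆ {v | v ∈ Φ} ∧
          s.card < finrank ℝ (Submodule.span ℝ {v | v ∈ Φ})},
        (Submodule.span ℝ (s : Set V) : Set V))ᶜ := by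
    ext x
    constructor
    · rintro ⟨-, h2⟩ hx
      rw [Set.mem_iUnion₂] at hx
      obtain ⟨s, hs, hxs⟩ := hx
      exact h2 ⟨s, hs.1, hs.2, hxs⟩
    · intro h
      refine ⟨by rw [hspan]; trivial, ?_⟩
      rintro ⟨s, h1, h2, h3⟩
      exact h (Set.mem_iUnion₂.2 ⟨s, ⟨h1, h2⟩, h3⟩)
  rw [he, isOpen_compl_iff]
  apply Set.Finite.isClosed_biUnion
  · letI := Classical.decEq V
    apply Set.Finite.subset (Φ.toFinset.powerset : Finset (Finset V)).finite_toSet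
    intro s hs
    have hs1 : ↑s ⊆ {v : V | v ∈ Φ} := hs.1
    simp only [Finset.mem_coe, Finset.mem_powerset]
    intro v hv
    exact List.mem_toFinset.2 (hs1 hv)
  · intro s _
    exact (Submodule.span ℝ (s : Set V)).closed_of_finiteDimensional

lemma regular_smul {Φ : List V} {x : V} (h : PhiRegular Φ x) {t : ℝ} (ht : t ≠ 0) :
    PhiRegular Φ (t • x) := by
  obtain ⟨h1, h2⟩ := h
  refine ⟨Submodule.smul_mem _ t h1, ?_⟩
  rintro ⟨s, hs1, hs2, hs3⟩
  apply h2
  refine ⟨s, hs1, hs2, ?_⟩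
  have := Submodule.smul_mem _ t⁻¹ hs3
  rwa [inv_smul_smul₀ ht] at this

lemma tope_smul {Φ : List V} {T : Set V} (hT : IsTope Φ T) {x : V} (hx : x ∈ T) {t : ℝ}
    (ht : 0 < t) : t • x ∈ T := by
  obtain ⟨γ, hγ, rfl⟩ := hT
  set R := {x : V | PhiRegular Φ x} with hR
  have hxR : x ∈ R := connectedComponentIn_subset _ _ hx
  set K := (fun s : ℝ => ((1 - s) + s * t) • x) '' Set.Icc (0:ℝ) 1 with hK
  have hKconn : IsPreconnected K := by
    apply IsPreconnected.image isPreconnected_Icc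
    apply Continuous.continuousOn
    exact (by continuity : Continuous fun s : ℝ => ((1 - s) + s * t)).smul continuous_const
  have hKR : K ⊆ R := by
    rintro _ ⟨s, hs, rfl⟩
    obtain ⟨hs0, hs1⟩ := hs
    apply regular_smul hxR
    intro hzero
    have h1 : s * t ≥ 0 := mul_nonneg hs0 ht.le
    have h2 : (1 : ℝ) - s ≥ 0 := by linarith
    have hst : s * t = 0 := by linarith
    have : s = 1 := by linarith
    rw [this, one_mul] at hst
    exact ht.ne' hst
  have hxK : x ∈ K := ⟨0, by simp, by simp⟩
  have htxK : t • x ∈ K := ⟨1, by simp, by simp⟩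
  have hsub : K ⊆ connectedComponentIn R x :=
    hKconn.subset_connectedComponentIn hxK hKR
  rw [connectedComponentIn_eq hx]
  exact hsub htxK

lemma tope_open {Φ : List V} {T : Set V} (hT : IsTope Φ T)
    (hspan : Submodule.span ℝ {v | v ∈ Φ} = ⊤) : IsOpen T := by
  obtain ⟨γ, hγ, rfl⟩ := hT
  set R := {x : V | PhiRegular Φ x} with hR
  have hRopen : IsOpen R := regular_open Φ hspan
  rw [Metric.isOpen_iff]
  intro x hx
  have hxR : x ∈ R := connectedComponentIn_subset _ _ hx
  obtain ⟨ε, hε, hball⟩ := Metric.isOpen_iff.1 hRopen x hxR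
  refine ⟨ε, hε, ?_⟩
  have hconn : IsPreconnected (Metric.ball x ε) := (convex_ball x ε).isPreconnected
  have := hconn.subset_connectedComponentIn (Metric.mem_ball_self hε) hball
  rw [connectedComponentIn_eq hx]
  exact this

lemma lattice_basis (Λ : Submodule ℤ V) (hΛ : IsLattice Λ) :
    ∃ e : Basis (Fin (finrank ℝ V)) ℝ V, ∀ i, e i ∈ Λ := by
  obtain ⟨hspan, ⟨b⟩⟩ := hΛ
  set f : Fin (finrank ℝ V) → V := fun i => (b i : V) with hf
  have hsub : (Λ : Set V) ⊆ ↑(Submodule.span ℝ (Set.range f)) := by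
    intro x hx
    have hx' : (⟨x, hx⟩ : Λ) = ∑ i, b.repr ⟨x, hx⟩ i • b i := (b.sum_repr ⟨x, hx⟩).symm
    have := congrArg (Λ.subtype) hx'
    rw [map_sum] at this
    simp only [Submodule.subtype_apply] at this
    rw [this]
    apply Submodule.sum_mem
    intro i _
    rw [Submodule.coe_smul, ← Int.cast_smul_eq_zsmul ℝ]
    exact Submodule.smul_mem _ _ (Submodule.subset_span (Set.mem_range_self i))
  have htop : ⊤ ≤ Submodule.span ℝ (Set.range f) := by
    rw [← hspan]
    exact Submodule.span_le.2 hsub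
  refine ⟨basisOfTopLeSpanOfCardEqFinrank f htop (by simp), ?_⟩
  intro i
  rw [coe_basisOfTopLeSpanOfCardEqFinrank]
  exact SetLike.coe_mem (b i)

lemma lattice_covering {n : ℕ} (Λ : Submodule ℤ V) (e : Basis (Fin n) ℝ V)
    (he : ∀ i, e i ∈ Λ) (x : V) : ∃ w ∈ Λ, ‖x - w‖ ≤ ∑ i, ‖e i‖ := by
  set r : Fin n → ℝ := fun i => e.repr x i with hr
  refine ⟨∑ i, (⌊r i⌋ : ℤ) • e i, Submodule.sum_mem _ fun i _ =>
    Submodule.smul_mem _ _ (he i), ?_⟩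
  have hx : x = ∑ i, r i • e i := by rw [hr]; exact (e.sum_repr x).symm
  have hd : x - ∑ i, (⌊r i⌋ : ℤ) • e i = ∑ i, Int.fract (r i) • e i := by
    conv_lhs => rw [hx]
    rw [← Finset.sum_sub_distrib]
    congr 1; funext i
    rw [← Int.cast_smul_eq_zsmul ℝ, ← sub_smul, Int.self_sub_floor]
  rw [hd]
  refine (norm_sum_le _ _).trans ?_
  apply Finset.sum_le_sum
  intro i _
  rw [norm_smul, Real.norm_eq_abs, abs_of_nonneg (Int.fract_nonneg _)]
  nlinarith [Int.fract_lt_one (r i), Int.fract_nonneg (r i), norm_nonneg (e i)]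

set_option maxHeartbeats 2000000 in
/-- Independence of the asymptotic character `Δ` of the choice of polarizing vector: if the two
polarized sums of partition functions agree for all `k ≥ 0`, then the corresponding sums of
quasi-polynomials agree on `Λ`. -/
theorem delta_independent_of_polarization
    {F : Type*} [Fintype F]
    (Λ : Submodule ℤ V) (hΛ : IsLattice Λ)
    (μ : F → V) (hμ : ∀ p, μ p ∈ Λ)
    (Ψ : F → List V) (hΨ : ∀ p, ∀ η ∈ Ψ p, η ∈ Λ)
    (Φ : F → List V)
    (hΦ0 : ∀ p, ∀ φ ∈ Φ p, φ ≠ 0) (hΦΛ : ∀ p, ∀ φ ∈ Φ p, φ ∈ Λ)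
    (hspan : ∀ p, Submodule.span ℝ {v | v ∈ Φ p} = ⊤)
    (Y Y' : V) (hY : ∀ p, Polarizing (Φ p) Y) (hY' : ∀ p, Polarizing (Φ p) Y')
    (A : Set V) (hA : IsAlcove μ Φ A)
    (T : F → Set V) (hT : ∀ p, IsTope (Φ p) (T p))
    (hTA : ∀ p, ∀ x ∈ A, x - μ p ∈ T p)
    (q q' : F → V → ℂ)
    (hq : ∀ p, IsQuasiPoly Λ (q p)) (hq' : ∀ p, IsQuasiPoly Λ (q' p))
    (hqT : ∀ p, ∀ lam ∈ (Λ : Set V) ∩ T p, q p lam = (theta (Φ p) Y lam : ℂ))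
    (hq'T : ∀ p, ∀ lam ∈ (Λ : Set V) ∩ T p, q' p lam = (theta (Φ p) Y' lam : ℂ))
    (htheta : ∀ k : ℤ, 0 ≤ k → ∀ lam ∈ Λ,
      (∑ p : F, ((Ψ p).map (fun η => theta (Φ p) Y (lam - η - k • μ p))).sum) =
        ∑ p : F, ((Ψ p).map (fun η => theta (Φ p) Y' (lam - η - k • μ p))).sum) :
    ∀ lam ∈ Λ,
      (∑ p : F, ((Ψ p).map (fun η => q p (lam - η))).sum) =
        ∑ p : F, ((Ψ p).map (fun η => q' p (lam - η))).sum := by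
  intro lam hlam
  by_cases hFne : Nonempty F
  swap
  · haveI : IsEmpty F := not_nonempty_iff.1 hFne
    simp
  -- quasi-polynomial data
  choose Ξ hΞle hΞN hcos using hq
  choose Nf hNfpos hNfmem using hΞN
  choose Ξ' hΞ'le hΞ'N hcos' using hq'
  choose Nf' hNf'pos hNf'mem using hΞ'N
  obtain ⟨N, hNpos, hNmem, hNmem'⟩ : ∃ N : ℕ, 0 < N ∧
      (∀ p, ∀ v ∈ Λ, (N : ℤ) • v ∈ Ξ p) ∧ (∀ p, ∀ v ∈ Λ, (N : ℤ) • v ∈ Ξ' p) := by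
    refine ⟨(∏ p : F, Nf p) * ∏ p : F, Nf' p,
      mul_pos (Finset.prod_pos fun p _ => hNfpos p) (Finset.prod_pos fun p _ => hNf'pos p),
      ?_, ?_⟩
    · intro p v hv
      obtain ⟨c, hc⟩ : Nf p ∣ (∏ p : F, Nf p) * ∏ p : F, Nf' p :=
        (Finset.dvd_prod_of_mem Nf (Finset.mem_univ p)).mul_right _
      rw [hc]
      push_cast
      rw [mul_smul]
      exact hNfmem p _ (Submodule.smul_mem _ _ hv)
    · intro p v hv
      obtain ⟨c, hc⟩ : Nf' p ∣ (∏ p : F, Nf p) * ∏ p : F, Nf' p :=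
        Dvd.dvd.mul_left (Finset.dvd_prod_of_mem Nf' (Finset.mem_univ p)) _
      rw [hc]
      push_cast
      rw [mul_smul]
      exact hNf'mem p _ (Submodule.smul_mem _ _ hv)
  -- choice of coset polynomials
  have hPex : ∀ (Ξp : Submodule ℤ V) (qp : V → ℂ),
      (∀ ξ ∈ Λ, ∃ pol : V → ℂ, IsPolyFun pol ∧ ∀ mu ∈ Ξp, qp (ξ + mu) = pol (ξ + mu)) →
      ∀ ξ : V, ∃ pol : V → ℂ, (ξ ∈ Λ → IsPolyFun pol) ∧
        (ξ ∈ Λ → ∀ mu ∈ Ξp, qp (ξ + mu) = pol (ξ + mu)) := by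
    intro Ξp qp h ξ
    by_cases hξ : ξ ∈ Λ
    · obtain ⟨pol, h1, h2⟩ := h ξ hξ
      exact ⟨pol, fun _ => h1, fun _ => h2⟩
    · exact ⟨0, fun h' => absurd h' hξ, fun h' => absurd h' hξ⟩
  choose PP hPP1 hPP2 using fun p => hPex (Ξ p) (q p) (hcos p)
  choose PP' hPP'1 hPP'2 using fun p => hPex (Ξ' p) (q' p) (hcos' p)
  -- geometry of the alcove and the topes
  obtain ⟨a, hareg, hAeq⟩ := hA
  have haA : a ∈ A := by rw [hAeq]; exact mem_connectedComponentIn hareg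
  have haT : ∀ p, a - μ p ∈ T p := fun p => hTA p a haA
  have hballs : ∀ p, ∃ ε > 0, Metric.ball (a - μ p) ε ⊆ T p :=
    fun p => Metric.isOpen_iff.1 (tope_open (hT p) (hspan p)) _ (haT p)
  choose εf hεfpos hεfball using hballs
  obtain ⟨ε, hεpos, hεle⟩ : ∃ ε : ℝ, 0 < ε ∧ ∀ p, ε ≤ εf p := by
    refine ⟨Finset.univ.inf' Finset.univ_nonempty εf, ?_, ?_⟩
    · rw [Finset.lt_inf'_iff]
      exact fun p _ => hεfpos p
    · exact fun p => Finset.inf'_le _ (Finset.mem_univ p)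
  have hTmem : ∀ p (c : ℝ), 0 < c → ∀ u : V, ‖u‖ < c * ε → c • (a - μ p) + u ∈ T p := by
    intro p c hc u hu
    have hmem : (a - μ p) + c⁻¹ • u ∈ Metric.ball (a - μ p) (εf p) := by
      rw [Metric.mem_ball, dist_eq_norm]
      have h1 : ‖a - μ p + c⁻¹ • u - (a - μ p)‖ = ‖c⁻¹ • u‖ := by congr 1; abel
      rw [h1, norm_smul, Real.norm_eq_abs, abs_of_pos (inv_pos.2 hc)]
      calc c⁻¹ * ‖u‖ < c⁻¹ * (c * ε) := by
            exact mul_lt_mul_of_pos_left hu (inv_pos.2 hc)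
        _ = ε := by field_simp
        _ ≤ εf p := hεle p
    have h2 := tope_smul (hT p) (hεfball p hmem) hc
    rwa [smul_add, smul_inv_smul₀ (ne_of_gt hc)] at h2
  -- lattice basis and covering radius
  obtain ⟨e0, he0⟩ := lattice_basis Λ hΛ
  set R : ℝ := (∑ i, ‖e0 i‖) + 1 with hRdef
  have hR0 : 0 ≤ ∑ i, ‖e0 i‖ := Finset.sum_nonneg fun i _ => norm_nonneg _
  have hRpos : 0 < R := by rw [hRdef]; linarith
  have hcover : ∀ x : V, ∃ w ∈ Λ, ‖x - w‖ ≤ R := by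
    intro x
    obtain ⟨w, hw, hb⟩ := lattice_covering Λ e0 he0 x
    exact ⟨w, hw, hb.trans (by rw [hRdef]; linarith)⟩
  have he0R : ∀ i, ‖e0 i‖ ≤ R := by
    intro i
    have := Finset.single_le_sum (f := fun i => ‖e0 i‖) (fun j _ => norm_nonneg _)
      (Finset.mem_univ i)
    rw [hRdef]; linarith
  -- constants
  set C : ℝ := ∑ p : F, ((Ψ p).map (fun η => ‖lam - η‖)).sum with hCdef
  have hCnn : ∀ p : F, (0:ℝ) ≤ ((Ψ p).map (fun η => ‖lam - η‖)).sum := by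
    intro p
    apply List.sum_nonneg
    rintro x hx
    obtain ⟨y, hy, rfl⟩ := List.mem_map.1 hx
    exact norm_nonneg _
  have hC0 : 0 ≤ C := Finset.sum_nonneg fun p _ => hCnn p
  have hCterm : ∀ p, ∀ η ∈ Ψ p, ‖lam - η‖ ≤ C := by
    intro p η hη
    have h1 : ‖lam - η‖ ≤ ((Ψ p).map (fun η => ‖lam - η‖)).sum :=
      list_single_le_sum (Ψ p) _ (fun x _ => norm_nonneg _) η hη
    have h2 : ((Ψ p).map (fun η => ‖lam - η‖)).sum ≤ C := by
      rw [hCdef]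
      exact Finset.single_le_sum (f := fun p => ((Ψ p).map (fun η => ‖lam - η‖)).sum)
        (fun j _ => hCnn j) (Finset.mem_univ p)
    linarith
  set j₀ : ℕ := ⌈(2 * C) / ((N : ℝ) * ε)⌉₊ + 1 with hj₀def
  have hj₀pos : 1 ≤ j₀ := by rw [hj₀def]; omega
  have hj₀C : ∀ j : ℤ, (j₀ : ℤ) ≤ j → C ≤ (N : ℝ) * (j:ℝ) * ε / 2 := by
    intro j hj
    have hNε : 0 < (N : ℝ) * ε := by positivity
    have h1 : (2 * C) / ((N:ℝ) * ε) ≤ (j₀ : ℝ) := by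
      rw [hj₀def]
      push_cast
      linarith [Nat.le_ceil ((2*C)/((N:ℝ)*ε))]
    have h2 : ((j₀:ℕ) : ℝ) ≤ (j : ℝ) := by exact_mod_cast hj
    have h3 : (2 * C) / ((N:ℝ) * ε) * ((N:ℝ)*ε) = 2 * C := div_mul_cancel₀ _ (ne_of_gt hNε)
    nlinarith
  set M : ℕ := max j₀ (⌈(4 * R) / ε⌉₊ + 1) with hMdef
  have hMj₀ : j₀ ≤ M := le_max_left _ _
  have hMpos : 0 < M := lt_of_lt_of_le hj₀pos hMj₀
  have hMR : 2 * R < (M : ℝ) * ε / 2 := by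
    have h1 : (4 * R) / ε < (M : ℝ) := by
      have h2 : ((⌈(4*R)/ε⌉₊ + 1 : ℕ) : ℝ) ≤ (M:ℝ) := by
        exact_mod_cast le_max_right j₀ (⌈(4 * R) / ε⌉₊ + 1)
      push_cast at h2
      linarith [Nat.le_ceil ((4*R)/ε)]
    have h2 : (4*R)/ε * ε = 4*R := div_mul_cancel₀ _ (ne_of_gt hεpos)
    nlinarith
  -- grid vectors
  obtain ⟨wM, hwMΛ, hwMnorm⟩ := hcover ((M:ℝ) • a)
  set u : Fin (finrank ℝ V + 1) → V := Fin.cons wM (fun i => wM + e0 i) with hudef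
  have huΛ : ∀ i, u i ∈ Λ := by
    intro i
    refine Fin.cases ?_ ?_ i
    · rw [hudef, Fin.cons_zero]; exact hwMΛ
    · intro i; rw [hudef, Fin.cons_succ]; exact Submodule.add_mem _ hwMΛ (he0 i)
  have hunorm : ∀ i, ‖u i - (M:ℝ) • a‖ ≤ 2 * R := by
    intro i
    refine Fin.cases ?_ ?_ i
    · rw [hudef, Fin.cons_zero, norm_sub_rev]; linarith
    · intro i
      rw [hudef, Fin.cons_succ]
      have h1 : wM + e0 i - (M:ℝ) • a = (wM - (M:ℝ) • a) + e0 i := by abel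
      rw [h1]
      refine (norm_add_le _ _).trans ?_
      rw [norm_sub_rev]
      linarith [he0R i]
  set v : Fin (finrank ℝ V + 1) → V × ℝ := fun i => (u i, (M:ℝ)) with hvdef
  -- linear independence
  have hvli : LinearIndependent ℝ v := by
    rw [Fintype.linearIndependent_iff]
    intro c hc
    have hsnd : (∑ i, c i • v i).2 = 0 := by rw [hc]; rfl
    rw [Prod.snd_sum] at hsnd
    simp only [hvdef, Prod.smul_snd, smul_eq_mul] at hsnd
    have hsum : (∑ i, c i) = 0 := by
      have hmul : (∑ i, c i) * (M:ℝ) = 0 := by rw [Finset.sum_mul]; exact hsnd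
      rcases mul_eq_zero.1 hmul with h | h
      · exact h
      · exact absurd h (by positivity)
    have hfst : (∑ i, c i • v i).1 = 0 := by rw [hc]; rfl
    rw [Prod.fst_sum] at hfst
    simp only [hvdef, Prod.smul_fst] at hfst
    rw [Fin.sum_univ_succ] at hfst
    simp only [hudef, Fin.cons_zero, Fin.cons_succ] at hfst
    have hsum' : c 0 + ∑ i : Fin (finrank ℝ V), c i.succ = 0 := by
      rw [← Fin.sum_univ_succ (f := c)]; exact hsum
    have hexp : c 0 • wM + ∑ i : Fin (finrank ℝ V), c i.succ • (wM + e0 i)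
        = (c 0 + ∑ i : Fin (finrank ℝ V), c i.succ) • wM
          + ∑ i : Fin (finrank ℝ V), c i.succ • e0 i := by
      rw [add_smul, Finset.sum_smul,
        Finset.sum_congr rfl (fun i _ => smul_add (c i.succ) wM (e0 i)),
        Finset.sum_add_distrib]
      abel
    rw [hexp, hsum', zero_smul, zero_add] at hfst
    have hzero : ∀ i : Fin (finrank ℝ V), c i.succ = 0 :=
      Fintype.linearIndependent_iff.1 e0.linearIndependent (fun i => c i.succ) hfst
    intro i
    refine Fin.cases ?_ hzero i
    have h0 : ∑ i : Fin (finrank ℝ V), c i.succ = 0 :=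
      Finset.sum_eq_zero fun i _ => hzero i
    rw [h0, add_zero] at hsum'
    exact hsum'
  have hcard : Fintype.card (Fin (finrank ℝ V + 1)) = finrank ℝ (V × ℝ) := by
    rw [Module.finrank_prod, finrank_self, Fintype.card_fin]
  haveI : Nonempty (Fin (finrank ℝ V + 1)) := ⟨0⟩
  set e : Basis (Fin (finrank ℝ V + 1)) ℝ (V × ℝ) :=
    basisOfLinearIndependentOfCardEqFinrank hvli hcard with hedef
  have hecoe : ∀ i, e i = v i := by
    intro i
    rw [hedef, coe_basisOfLinearIndependentOfCardEqFinrank]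
  -- the polynomial function
  set L : F → (V × ℝ) →ₗ[ℝ] V := fun p =>
    ((N:ℝ) • LinearMap.fst ℝ V ℝ) - ((LinearMap.snd ℝ V ℝ).smulRight ((N:ℝ) • μ p)) with hLdef
  have hLapp : ∀ p (x : V) (t : ℝ), L p (x, t) = (N:ℝ) • x - t • ((N:ℝ) • μ p) := by
    intro p x t
    simp [hLdef, LinearMap.sub_apply, LinearMap.smul_apply, LinearMap.smulRight_apply]
  have hL : ∀ p (w : V) (j : ℤ), L p (w, (j:ℝ)) = (N:ℤ) • (w - j • μ p) := by
    intro p w j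
    rw [hLapp, ← Int.cast_smul_eq_zsmul ℝ (N:ℤ) (w - j • μ p), smul_sub,
      ← Int.cast_smul_eq_zsmul ℝ j (μ p)]
    push_cast
    rw [smul_smul, smul_smul]
    ring_nf
  set P : (V × ℝ) → ℂ := fun z => ∑ p : F,
    ((Ψ p).map (fun η => PP p (lam - η) ((lam - η) + L p z)
      - PP' p (lam - η) ((lam - η) + L p z))).sum with hPdef
  have hPpoly : IsPolyFun P := by
    rw [hPdef]
    apply isPolyFun_finsetSum
    intro p _
    apply isPolyFun_listSum
    intro η hη
    have hmem : lam - η ∈ Λ := Submodule.sub_mem _ hlam (hΨ p η hη)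
    exact (isPolyFun_comp_affine (L p) (lam - η) (hPP1 p (lam - η) hmem)).sub
      (isPolyFun_comp_affine (L p) (lam - η) (hPP'1 p (lam - η) hmem))
  have hPlatt : ∀ w ∈ Λ, ∀ j : ℤ,
      P (w, (j:ℝ)) = ∑ p : F, ((Ψ p).map (fun η =>
        q p (lam + (N:ℤ) • w - η - ((N:ℤ) * j) • μ p)
        - q' p (lam + (N:ℤ) • w - η - ((N:ℤ) * j) • μ p))).sum := by
    intro w hw j
    rw [hPdef]
    apply Finset.sum_congr rfl
    intro p _
    apply congrArg List.sum
    apply List.map_congr_left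
    intro η hη
    have hmem : lam - η ∈ Λ := Submodule.sub_mem _ hlam (hΨ p η hη)
    have hwj : w - j • μ p ∈ Λ :=
      Submodule.sub_mem _ hw (Submodule.smul_mem _ _ (hμ p))
    have hmu : (N:ℤ) • (w - j • μ p) ∈ Ξ p := hNmem p _ hwj
    have hmu' : (N:ℤ) • (w - j • μ p) ∈ Ξ' p := hNmem' p _ hwj
    have harg : (lam - η) + (N:ℤ) • (w - j • μ p)
        = lam + (N:ℤ) • w - η - ((N:ℤ) * j) • μ p := by
      rw [smul_sub, smul_smul]
      abel
    rw [hL, ← hPP2 p (lam - η) hmem _ hmu, ← hPP'2 p (lam - η) hmem _ hmu', harg]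
  have hvanish : ∀ w ∈ Λ, ∀ j : ℤ, (j₀ : ℤ) ≤ j →
      ‖w - (j:ℝ) • a‖ < (j:ℝ) * ε / 2 → P (w, (j:ℝ)) = 0 := by
    intro w hw j hj hnorm
    have hj1 : (1:ℤ) ≤ j := le_trans (by exact_mod_cast hj₀pos) hj
    have hjpos : (0:ℝ) < (j:ℝ) := by exact_mod_cast lt_of_lt_of_le zero_lt_one hj1
    rw [hPlatt w hw j]
    have hlam' : lam + (N:ℤ) • w ∈ Λ := Submodule.add_mem _ hlam (Submodule.smul_mem _ _ hw)
    have hk0 : (0:ℤ) ≤ (N:ℤ) * j := mul_nonneg (by positivity) (by linarith)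
    have hargT : ∀ p, ∀ η ∈ Ψ p, lam + (N:ℤ) • w - η - ((N:ℤ) * j) • μ p ∈ T p := by
      intro p η hη
      have hc : (0:ℝ) < (N:ℝ) * (j:ℝ) := by positivity
      have hnb : ‖(N:ℝ) • (w - (j:ℝ) • a) + (lam - η)‖ < ((N:ℝ) * (j:ℝ)) * ε := by
        refine lt_of_le_of_lt (norm_add_le _ _) ?_
        rw [norm_smul, Real.norm_eq_abs, abs_of_pos (by positivity : (0:ℝ) < (N:ℝ))]
        have h1 : (N:ℝ) * ‖w - (j:ℝ) • a‖ < (N:ℝ) * ((j:ℝ) * ε / 2) :=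
          mul_lt_mul_of_pos_left hnorm (by positivity)
        have h2 : ‖lam - η‖ ≤ C := hCterm p η hη
        have h3 : C ≤ (N:ℝ) * (j:ℝ) * ε / 2 := hj₀C j hj
        nlinarith
      have key := hTmem p ((N:ℝ) * (j:ℝ)) hc ((N:ℝ) • (w - (j:ℝ) • a) + (lam - η)) hnb
      have hid : ((N:ℝ) * (j:ℝ)) • (a - μ p) + ((N:ℝ) • (w - (j:ℝ) • a) + (lam - η))
          = lam + (N:ℤ) • w - η - ((N:ℤ) * j) • μ p := by
        rw [← Int.cast_smul_eq_zsmul ℝ (N:ℤ) w, ← Int.cast_smul_eq_zsmul ℝ ((N:ℤ)*j) (μ p)]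
        push_cast
        module
      rwa [hid] at key
    have hargΛ : ∀ p, ∀ η ∈ Ψ p, lam + (N:ℤ) • w - η - ((N:ℤ) * j) • μ p ∈ Λ := fun p η hη =>
      Submodule.sub_mem _ (Submodule.sub_mem _ hlam' (hΨ p η hη))
        (Submodule.smul_mem _ _ (hμ p))
    have hcast : (∑ p : F, ((Ψ p).map (fun η =>
          q p (lam + (N:ℤ) • w - η - ((N:ℤ) * j) • μ p)
          - q' p (lam + (N:ℤ) • w - η - ((N:ℤ) * j) • μ p))).sum)
        = ((∑ p : F, ((Ψ p).map (fun η =>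
            theta (Φ p) Y (lam + (N:ℤ) • w - η - ((N:ℤ) * j) • μ p))).sum : ℤ) : ℂ)
          - ((∑ p : F, ((Ψ p).map (fun η =>
            theta (Φ p) Y' (lam + (N:ℤ) • w - η - ((N:ℤ) * j) • μ p))).sum : ℤ) : ℂ) := by
      have hlist : ∀ (l : List V) (f : V → ℤ),
          ((l.map (fun η => ((f η : ℤ) : ℂ))).sum) = (((l.map f).sum : ℤ) : ℂ) := by
        intro l f
        rw [Int.cast_list_sum, List.map_map]
        rfl
      rw [Int.cast_sum, Int.cast_sum, ← Finset.sum_sub_distrib]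
      apply Finset.sum_congr rfl
      intro p _
      rw [← hlist (Ψ p), ← hlist (Ψ p), ← list_sum_map_sub]
      apply congrArg List.sum
      apply List.map_congr_left
      intro η hη
      rw [hqT p _ ⟨hargΛ p η hη, hargT p η hη⟩, hq'T p _ ⟨hargΛ p η hη, hargT p η hη⟩]
    rw [hcast, htheta ((N:ℤ) * j) hk0 (lam + (N:ℤ) • w) hlam', sub_self]
  -- the polynomial vanishes identically
  obtain ⟨FP, hFP⟩ := isPolyFun_rep e hPpoly
  have hFP0 : FP = 0 := by
    apply mvZero _ FP
      (fun i => {z : ℂ | ∃ kk : ℕ, z = (kk : ℂ) + (if i = 0 then 1 else 0)})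
    · intro i
      apply Set.infinite_of_injective_forall_mem
        (f := fun kk : ℕ => (kk : ℂ) + (if i = 0 then 1 else 0))
      · intro x y hxy
        simp only [add_left_inj] at hxy
        exact_mod_cast hxy
      · intro kk
        exact ⟨kk, rfl⟩
    · intro x hx
      choose nn hnn using hx
      set m : Fin (finrank ℝ V + 1) → ℕ := fun i => nn i + (if i = 0 then 1 else 0) with hmdef
      have hxm : ∀ i, x i = (m i : ℂ) := by
        intro i
        rw [hnn i, hmdef]
        push_cast
        rfl
      set gw : V := ∑ i, (m i : ℤ) • u i with hgwdef
      have hgwΛ : gw ∈ Λ := Submodule.sum_mem _ fun i _ => Submodule.smul_mem _ _ (huΛ i)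
      set jg : ℕ := (∑ i, m i) * M with hjgdef
      set z : V × ℝ := ∑ i, (m i : ℝ) • v i with hzdef
      have hgwreal : gw = ∑ i, (m i : ℝ) • u i := by
        rw [hgwdef]
        apply Finset.sum_congr rfl
        intro i _
        rw [← Int.cast_smul_eq_zsmul ℝ]
        norm_num
      have hjgreal : ((jg:ℤ):ℝ) = ∑ i, (m i : ℝ) * (M:ℝ) := by
        rw [hjgdef]
        push_cast
        rw [Finset.sum_mul]
      have hz : z = (gw, ((jg:ℤ) : ℝ)) := by
        rw [hzdef]
        apply Prod.ext
        · rw [Prod.fst_sum, hgwreal]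
          apply Finset.sum_congr rfl
          intro i _
          rw [hvdef]
          rfl
        · rw [Prod.snd_sum, hjgreal]
          apply Finset.sum_congr rfl
          intro i _
          rw [hvdef]
          rfl
      have hm0 : 1 ≤ m 0 := by rw [hmdef]; simp
      have hmsum : 1 ≤ ∑ i, m i :=
        le_trans hm0 (Finset.single_le_sum (fun i _ => Nat.zero_le _) (Finset.mem_univ 0))
      have hjgj₀ : (j₀ : ℤ) ≤ (jg : ℤ) := by
        have h1 : j₀ ≤ jg := by
          rw [hjgdef]
          calc j₀ ≤ M := hMj₀
          _ = 1 * M := (one_mul M).symm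
          _ ≤ (∑ i, m i) * M := Nat.mul_le_mul_right M hmsum
        exact_mod_cast h1
      have hkey : gw - ((jg:ℤ):ℝ) • a = ∑ i, (m i : ℝ) • (u i - (M:ℝ) • a) := by
        rw [hgwreal, hjgreal, Finset.sum_smul, ← Finset.sum_sub_distrib]
        apply Finset.sum_congr rfl
        intro i _
        rw [smul_sub, smul_smul]
      have hsum1 : (1:ℝ) ≤ ∑ i, (m i : ℝ) := by
        have : ((1:ℕ):ℝ) ≤ ((∑ i, m i : ℕ) : ℝ) := by exact_mod_cast hmsum
        push_cast at this
        linarith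
      have hnormz : ‖gw - ((jg:ℤ):ℝ) • a‖ < ((jg:ℤ):ℝ) * ε / 2 := by
        have hb1 : ‖gw - ((jg:ℤ):ℝ) • a‖ ≤ (∑ i, (m i : ℝ)) * (2*R) := by
          rw [hkey]
          refine (norm_sum_le _ _).trans ?_
          rw [Finset.sum_mul]
          apply Finset.sum_le_sum
          intro i _
          rw [norm_smul, Real.norm_eq_abs, abs_of_nonneg (by positivity)]
          exact mul_le_mul_of_nonneg_left (hunorm i) (by positivity)
        have hjgval : ((jg:ℤ):ℝ) = (∑ i, (m i : ℝ)) * (M:ℝ) := by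
          rw [hjgreal, Finset.sum_mul]
        have hlt : (∑ i, (m i : ℝ)) * (2*R) < (∑ i, (m i : ℝ)) * ((M:ℝ) * ε / 2) :=
          mul_lt_mul_of_pos_left hMR (by linarith)
        rw [hjgval]
        calc ‖gw - ((∑ i, (m i : ℝ)) * (M:ℝ)) • a‖ ≤ (∑ i, (m i : ℝ)) * (2*R) := by
              rw [← hjgval]; exact hb1
          _ < (∑ i, (m i : ℝ)) * ((M:ℝ) * ε / 2) := hlt
          _ = (∑ i, (m i : ℝ)) * (M:ℝ) * ε / 2 := by ring
      have hPz : P (gw, ((jg:ℤ):ℝ)) = 0 := hvanish gw hgwΛ (jg:ℤ) hjgj₀ hnormz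
      have hrepr : ∀ i, e.repr z i = (m i : ℝ) := by
        have hze : z = ∑ i, (m i : ℝ) • e i := by
          rw [hzdef]
          exact Finset.sum_congr rfl fun i _ => by rw [hecoe i]
        intro i
        rw [hze, e.repr_sum_self]
      calc MvPolynomial.eval x FP
          = MvPolynomial.eval (fun i => ((e.repr z i : ℝ) : ℂ)) FP := by
            have hxe : x = (fun i => ((e.repr z i : ℝ) : ℂ)) := by
              funext i
              rw [hrepr i, hxm i]
              norm_cast
            rw [hxe]
        _ = P z := (hFP z).symm
        _ = 0 := by rw [hz]; exact hPz
  have hPzero : ∀ zz, P zz = 0 := by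
    intro zz
    rw [hFP zz, hFP0, map_zero]
  -- conclusion
  have h00 : P ((0:V), (0:ℝ)) = 0 := hPzero _
  have hP00 : P ((0:V), (0:ℝ)) = (∑ p : F, ((Ψ p).map (fun η => q p (lam - η))).sum)
      - ∑ p : F, ((Ψ p).map (fun η => q' p (lam - η))).sum := by
    rw [hPdef]
    rw [← Finset.sum_sub_distrib]
    apply Finset.sum_congr rfl
    intro p _
    rw [← list_sum_map_sub]
    apply congrArg List.sum
    apply List.map_congr_left
    intro η hη
    have hmem : lam - η ∈ Λ := Submodule.sub_mem _ hlam (hΨ p η hη)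
    have hz0 : L p ((0:V), (0:ℝ)) = 0 := map_zero (L p)
    rw [hz0, ← hPP2 p (lam - η) hmem 0 (Submodule.zero_mem _),
      ← hPP'2 p (lam - η) hmem 0 (Submodule.zero_mem _), add_zero]
  rw [hP00] at h00
  exact sub_eq_zero.1 h00
end
end
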